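/- Let K be a finite field of characteristic 2, G a finite group, and (R,Q) a 2-dimensional anisotropic non-degenerate equivariant quadratic KG-module with socle ⟨e⟩ ≅ T, Q(e) = 1, on which G acts non-trivially. Then R has a basis (f,e) with B_Q(f,e) = 1 and Q(f) ∈ {0, α} (where X² + X + α is irreducible over K), and every g ∈ G acts either trivially or by f ↦ f + e, e ↦ e; thus the action factors through an epimorphism τ : G → C₂. -/

import Mathlib

open QuadraticMap

variable {K : Type*} [Field K] {G : Type*} [Group G]
variable {V W : Type*} [AddCommGroup V] [Module K V] [AddCommGroup W] [Module K W]

/-- `U` is a `KG`-submodule, i.e. invariant under the representation `ρ`. -/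
def IsSubrep (ρ : Representation K G V) (U : Submodule K V) : Prop :=
  ∀ g : G, ∀ v ∈ U, ρ g v ∈ U

/-- The quadratic form `Q` is `G`-invariant. -/
def GInvariantQF (ρ : Representation K G V) (Q : QuadraticForm K V) : Prop :=
  ∀ g v, Q (ρ g v) = Q v

/-- Orthogonal complement of a submodule with respect to the polarization of `Q`. -/
def qperp (Q : QuadraticForm K V) (U : Submodule K V) : Submodule K V :=
  LinearMap.BilinForm.orthogonal Q.polarBilin U

/-- `Q` is non-degenerate: the radical of its polarization is zero. -/
def QNondeg (Q : QuadraticForm K V) : Prop :=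
  LinearMap.BilinForm.Nondegenerate Q.polarBilin

/-- `(V, Q)` is metabolic: there is a `KG`-submodule `N` with `N = N^⊥` and `Q(N) = 0`. -/
def Metabolic (ρ : Representation K G V) (Q : QuadraticForm K V) : Prop :=
  ∃ N : Submodule K V, IsSubrep ρ N ∧ N = qperp Q N ∧ ∀ v ∈ N, Q v = 0

/-- `(V, Q)` is anisotropic: `Q` does not vanish on any non-zero `KG`-submodule. -/
def AnisotropicRep (ρ : Representation K G V) (Q : QuadraticForm K V) : Prop :=
  ∀ U : Submodule K V, IsSubrep ρ U → (∀ v ∈ U, Q v = 0) → U = ⊥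

/-- The product (orthogonal direct sum) of two representations. -/
def prodRep (ρ : Representation K G V) (σ : Representation K G W) :
    Representation K G (V × W) :=
  ⟨⟨fun g => (ρ g).prodMap (σ g), by ext v <;> simp⟩, fun g h => by ext v <;> simp⟩

/-- `V` is a simple `KG`-module. -/
def SimpleRep (ρ : Representation K G V) : Prop :=
  Nontrivial V ∧ ∀ U : Submodule K V, IsSubrep ρ U → U = ⊥ ∨ U = ⊤

/-- `V` is a self-dual `KG`-module. -/
def SelfDualRep (ρ : Representation K G V) : Prop :=
  ∃ f : V ≃ₗ[K] Module.Dual K V, ∀ g v, f (ρ g v) = ρ.dual g (f v)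

/-- The socle: the sum of all simple `KG`-submodules. -/
def socleRep (ρ : Representation K G V) : Submodule K V :=
  sSup {U : Submodule K V | IsSubrep ρ U ∧ U ≠ ⊥ ∧
    ∀ U' : Submodule K V, U' ≤ U → IsSubrep ρ U' → U' = ⊥ ∨ U' = U}

/-- a 2-dimensional anisotropic equivariant quadratic module with socle
`⟨e⟩ ≅ T`, `Q e = 1` and non-trivial `G`-action has a basis `(f,e)` with
`B_Q(f,e) = 1`, `Q f ∈ {0, α}`, every `g ∈ G` acts trivially or by `f ↦ f + e`,
and the action factors through an epimorphism `τ : G → C₂`. -/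
theorem stmt16 [Fintype K] (h2 : ringChar K = 2) [Finite G]
    (ρ : Representation K G V) (Q : QuadraticForm K V)
    (hdim : Module.finrank K V = 2)
    (hinv : GInvariantQF ρ Q) (hnd : QNondeg Q) (han : AnisotropicRep ρ Q)
    (e : V) (hsoc : socleRep ρ = Submodule.span K {e})
    (he : ∀ g, ρ g e = e) (hQe : Q e = 1)
    (hntriv : ∃ g v, ρ g v ≠ v) :
    ∃ b : Module.Basis (Fin 2) K V, b 1 = e ∧ polar Q (b 0) e = 1 ∧
      (Q (b 0) = 0 ∨ ∃ α : K, Q (b 0) = α ∧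
        Irreducible (Polynomial.X ^ 2 + Polynomial.X + Polynomial.C α)) ∧
      (∀ g : G, (∀ v, ρ g v = v) ∨ (ρ g (b 0) = b 0 + e ∧ ρ g e = e)) ∧
      ∃ τ : G →* Multiplicative (ZMod 2), Function.Surjective τ ∧
        ∀ g, τ g = 1 ↔ ∀ v, ρ g v = v := by
    classical
  haveI : CharP K 2 := ringChar.of_eq h2
  have h2' : (2 : K) = 0 := CharTwo.two_eq_zero
  have addself : ∀ v : V, v + v = 0 := fun v => by
    rw [← two_smul K v, h2', zero_smul]
  have hinv' : ∀ (g : G) (v : V), Q (ρ g v) = Q v := hinv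
  have he0 : e ≠ 0 := by
    intro h
    rw [h, QuadraticMap.map_zero] at hQe
    exact one_ne_zero hQe.symm
  have hpee : polar Q e e = 0 := by
    rw [polar, addself e, QuadraticMap.map_zero, hQe]
    linear_combination (-1 : K) * h2'
  have expand : ∀ (x : V) (a : K), Q (x + a • e) = Q x + (a * a + a * polar Q x e) := by
    intro x a
    have h1 : polar Q x (a • e) = Q (x + a • e) - Q x - Q (a • e) := rfl
    have h2 : Q (a • e) = a * a := by
      rw [QuadraticMap.map_smul, hQe, smul_eq_mul, mul_one]
    have h3 : polar Q x (a • e) = a * polar Q x e := by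
      rw [polar_smul_right, smul_eq_mul]
    linear_combination (-1 : K) * h1 + h2 + h3
  -- polar invariance
  have hpinv : ∀ (g : G) (x y : V), polar Q (ρ g x) (ρ g y) = polar Q x y := by
    intro g x y
    simp only [polar, ← map_add, hinv']
  -- find f0 with polar Q f0 e ≠ 0
  obtain ⟨f0, hf0⟩ : ∃ f0 : V, polar Q f0 e ≠ 0 := by
    by_contra h
    push_neg at h
    refine he0 ((show LinearMap.BilinForm.Nondegenerate Q.polarBilin from hnd).1 e fun n => ?_)
    have := h n
    simpa [QuadraticMap.polarBilin] using (polar_comm Q e n).trans this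
  set c0 := polar Q f0 e with hc0
  have hf1 : polar Q (c0⁻¹ • f0) e = 1 := by
    rw [polar_smul_left, smul_eq_mul, inv_mul_cancel₀ hf0]
  -- normalize Q f
  obtain ⟨f, hpf, hQf⟩ : ∃ f : V, polar Q f e = 1 ∧
      (Q f = 0 ∨ ∀ a : K, a * a + a ≠ Q f) := by
    by_cases h : ∃ a : K, a * a + a = Q (c0⁻¹ • f0)
    · obtain ⟨a, ha⟩ := h
      refine ⟨c0⁻¹ • f0 + a • e, ?_, Or.inl ?_⟩
      · rw [polar_add_left, hf1, polar_smul_left, hpee, smul_zero, add_zero]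
      · rw [expand, hf1, mul_one, ha, CharTwo.add_self_eq_zero]
    · push_neg at h
      exact ⟨c0⁻¹ • f0, hf1, Or.inr h⟩
  clear hf1 hc0 hf0
  -- basis
  have hind : LinearIndependent K ![f, e] := by
    rw [linearIndependent_fin2]
    refine ⟨by simpa using he0, fun a ha => ?_⟩
    simp only [Matrix.cons_val_one, Matrix.head_cons, Matrix.cons_val_zero] at ha
    rw [← ha, polar_smul_left, hpee, smul_zero] at hpf
    exact one_ne_zero hpf.symm
  have hcard : Fintype.card (Fin 2) = Module.finrank K V := by simp [hdim]
  set b := basisOfLinearIndependentOfCardEqFinrank hind hcard with hbdef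
  have hb0 : b 0 = f := by rw [hbdef, coe_basisOfLinearIndependentOfCardEqFinrank]; rfl
  have hb1 : b 1 = e := by rw [hbdef, coe_basisOfLinearIndependentOfCardEqFinrank]; rfl
  -- every v is a combination of f and e
  have hrep : ∀ v : V, v = b.repr v 0 • f + b.repr v 1 • e := by
    intro v
    conv_lhs => rw [← b.sum_repr v]
    rw [Fin.sum_univ_two, hb0, hb1]
  have fixall : ∀ g : G, ρ g f = f → ∀ v, ρ g v = v := by
    intro g hgf v
    conv_lhs => rw [hrep v]
    rw [map_add, LinearMap.map_smul, LinearMap.map_smul, hgf, he g, ← hrep v]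
  -- key dichotomy
  have key : ∀ g : G, ρ g f = f ∨ ρ g f = f + e := by
    intro g
    set w := ρ g f with hw
    have hpw : polar Q w e = 1 := by
      rw [hw, ← he g, hpinv, hpf]
    have hwrep := hrep w
    set c := b.repr w 0 with hc
    set d := b.repr w 1 with hd
    have hc1 : c = 1 := by
      have : polar Q (c • f + d • e) e = 1 := by rw [← hwrep]; exact hpw
      rw [polar_add_left, polar_smul_left, polar_smul_left, hpee, smul_zero, add_zero,
        hpf, smul_eq_mul, mul_one] at this
      exact this
    rw [hc1, one_smul] at hwrep
    have hQw : Q w = Q f := hinv' g f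
    rw [hwrep, expand, hpf, mul_one] at hQw
    have hdd : d * d + d = 0 := by linear_combination hQw
    have : d * (d + 1) = 0 := by linear_combination hdd
    rcases mul_eq_zero.mp this with h | h
    · left; rw [hwrep, h, zero_smul, add_zero]
    · right
      have : d = 1 := by
        have hd1' : d = -1 := by linear_combination h
        rw [hd1', CharTwo.neg_eq]
      rw [hwrep, this, one_smul]
  have hfne : f + e ≠ f := by
    intro h
    exact he0 (by rwa [add_eq_left] at h)
  -- the d function
  let dd : G → ZMod 2 := fun g => if ρ g f = f then 0 else 1
  have hd0 : ∀ g, ρ g f = f → dd g = 0 := fun g h => by simp only [dd, if_pos h]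
  have hd1 : ∀ g, ρ g f = f + e → dd g = 1 := fun g h => by
    simp only [dd]
    rw [if_neg]
    rw [h]
    exact hfne
  have hmulf : ∀ g h : G, ρ (g * h) f = ρ g (ρ h f) := by
    intro g h
    rw [map_mul]
    rfl
  have dmul : ∀ g h : G, dd (g * h) = dd g + dd h := by
    intro g h
    rcases key g with hg | hg <;> rcases key h with hh | hh
    · rw [hd0 g hg, hd0 h hh, hd0 (g * h) (by rw [hmulf, hh, hg]), add_zero]
    · rw [hd0 g hg, hd1 h hh, hd1 (g * h)
        (by rw [hmulf, hh, map_add, hg, he g]), zero_add]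
    · rw [hd1 g hg, hd0 h hh, hd1 (g * h) (by rw [hmulf, hh, hg]), add_zero]
    · rw [hd1 g hg, hd1 h hh,
        hd0 (g * h) (by rw [hmulf, hh, map_add, hg, he g, add_assoc, addself e, add_zero])]
      decide
  have hdone : ∀ g : G, dd g = 0 ↔ ∀ v, ρ g v = v := by
    intro g
    constructor
    · intro hg v
      rcases key g with h | h
      · exact fixall g h v
      · rw [hd1 g h] at hg; exact absurd hg one_ne_zero
    · intro hg
      exact hd0 g (hg f)
  let τ : G →* Multiplicative (ZMod 2) :=
    { toFun := fun g => Multiplicative.ofAdd (dd g)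
      map_one' := by
        show Multiplicative.ofAdd (dd 1) = 1
        rw [hd0 1 (by rw [map_one]; rfl)]; rfl
      map_mul' := fun g h => by
        show Multiplicative.ofAdd (dd (g * h)) =
          Multiplicative.ofAdd (dd g) * Multiplicative.ofAdd (dd h)
        rw [dmul g h]; rfl }
  obtain ⟨g0, v0, hv0⟩ := hntriv
  have hdg0 : dd g0 = 1 := by
    rcases key g0 with h | h
    · exact absurd (fixall g0 h v0) hv0
    · exact hd1 g0 h
  refine ⟨b, hb1, by rw [hb0]; exact hpf, ?_, ?_, τ, ?_, ?_⟩
  · rw [hb0]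
    rcases hQf with h | h
    · exact Or.inl h
    · refine Or.inr ⟨Q f, rfl, ?_⟩
      have hnat : (Polynomial.X ^ 2 + Polynomial.X + Polynomial.C (Q f) : Polynomial K).natDegree = 2 := by
        compute_degree!
      rw [Polynomial.irreducible_iff_roots_eq_zero_of_degree_le_three
        (by rw [hnat]) (by rw [hnat]; norm_num)]
      rw [Multiset.eq_zero_iff_forall_notMem]
      intro a ha
      rw [Polynomial.mem_roots', Polynomial.IsRoot] at ha
      have hev := ha.2
      simp only [Polynomial.eval_add, Polynomial.eval_pow, Polynomial.eval_X,
        Polynomial.eval_C] at hev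
      refine h a ?_
      have h4 : a * a + a = -(Q f) := by linear_combination hev
      rw [h4, CharTwo.neg_eq]
  · intro g
    rcases key g with h | h
    · exact Or.inl (fixall g h)
    · exact Or.inr ⟨by rw [hb0]; exact h, he g⟩
  · intro x
    have hx : x = Multiplicative.ofAdd (0 : ZMod 2) ∨ x = Multiplicative.ofAdd (1 : ZMod 2) := by
      have : ∀ y : ZMod 2, y = 0 ∨ y = 1 := by decide
      rcases this (Multiplicative.toAdd x) with h | h
      · left; rw [← h]; rfl
      · right; rw [← h]; rfl
    rcases hx with h | h
    · refine ⟨1, ?_⟩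
      rw [map_one, h]; rfl
    · refine ⟨g0, ?_⟩
      show Multiplicative.ofAdd (dd g0) = x
      rw [hdg0, h]
  · intro g
    rw [← hdone g]
    constructor
    · intro h
      have : Multiplicative.ofAdd (dd g) = Multiplicative.ofAdd (0 : ZMod 2) := h
      exact Multiplicative.ofAdd.injective this
    · intro h
      show Multiplicative.ofAdd (dd g) = 1
      rw [h]; rfl
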